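/- Let M = [[A, B], [C, A^T]] be a symplectic Wonenburger matrix. If a is a real eigenvalue of A, then λ(a) = a + sqrt(a^2 - 1) is an eigenvalue of M, where for a^2 < 1 the square root is taken as i·sqrt(1 - a^2) (so λ(a) is a complex eigenvalue of modulus 1). -/

import Mathlib

open Matrix

private lemma mapMV {n : ℕ} (M : Matrix (Fin n) (Fin n) ℝ) (v : Fin n → ℝ) :
    (M.map Complex.ofReal).mulVec (fun j => (v j : ℂ)) = fun i => ((M.mulVec v) i : ℂ) := by
  funext i
  exact (RingHom.map_mulVec Complex.ofRealHom M v i).symm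

/-- If `a` is a real eigenvalue of the first block `A` of a symplectic Wonenburger matrix
`M = [[A,B],[C,Aᵀ]]`, then `λ(a) = a + √(a² - 1)` is a (complex) eigenvalue of `M`, where
for `a² < 1` the square root is `i·√(1 - a²)` (the principal complex square root). -/
theorem stability_index_gives_eigenvalue (n : ℕ) (A B C : Matrix (Fin n) (Fin n) ℝ)
    (hB : B = Bᵀ) (hC : C = Cᵀ) (hAB : A * B = B * Aᵀ) (hAC : Aᵀ * C = C * A)
    (hA : A * A - B * C = 1) (a : ℝ)
    (hev : ∃ v : Fin n → ℝ, v ≠ 0 ∧ A.mulVec v = a • v) :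
    ∃ w : (Fin n ⊕ Fin n) → ℂ, w ≠ 0 ∧
      ((Matrix.fromBlocks A B C Aᵀ).map Complex.ofReal).mulVec w =
        ((a : ℂ) + ((a : ℂ) ^ 2 - 1) ^ ((1 : ℂ) / 2)) • w := by
  obtain ⟨v, hv, hAv⟩ := hev
  set s : ℂ := ((a : ℂ) ^ 2 - 1) ^ ((1 : ℂ) / 2) with hsdef
  have hs2 : s ^ 2 = (a : ℂ) ^ 2 - 1 := by
    by_cases h : (a : ℂ) ^ 2 - 1 = 0
    · rw [hsdef, h, Complex.zero_cpow (by norm_num)]; ring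
    · rw [hsdef, sq, ← Complex.cpow_add _ _ h]
      norm_num
  -- real facts
  have hBC : B * C = A * A - 1 := by
    rw [← hA, sub_sub_cancel]
  have hr2 : B.mulVec (C.mulVec v) = (a ^ 2 - 1) • v := by
    rw [Matrix.mulVec_mulVec, hBC, Matrix.sub_mulVec, ← Matrix.mulVec_mulVec, hAv,
      Matrix.mulVec_smul, hAv, Matrix.one_mulVec, smul_smul, sub_smul, one_smul, ← sq]
  have hr4 : Aᵀ.mulVec (C.mulVec v) = a • C.mulVec v := by
    rw [Matrix.mulVec_mulVec, hAC, ← Matrix.mulVec_mulVec, hAv, Matrix.mulVec_smul]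
  -- complex vectors
  set vC : Fin n → ℂ := fun i => (v i : ℂ) with hvCdef
  set cC : Fin n → ℂ := fun i => ((C.mulVec v) i : ℂ) with hcCdef
  have hvC : vC ≠ 0 := by
    intro h
    apply hv
    funext i
    have := congrFun h i
    simpa [hvCdef] using this
  have h1 : (A.map Complex.ofReal).mulVec vC = (a : ℂ) • vC := by
    rw [hvCdef, mapMV, hAv]; funext i; simp
  have h2 : (B.map Complex.ofReal).mulVec cC = ((a : ℂ) ^ 2 - 1) • vC := by
    rw [hcCdef, mapMV, hr2]; funext i; push_cast; simp [hvCdef]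
  have h3 : (C.map Complex.ofReal).mulVec vC = cC := by
    rw [hvCdef, mapMV]
  have h4 : (Aᵀ.map Complex.ofReal).mulVec cC = (a : ℂ) • cC := by
    rw [hcCdef, mapMV, hr4]; funext i; simp
  rw [Matrix.fromBlocks_map]
  by_cases hzero : s = 0 ∧ cC = 0
  · -- special case: eigenvector (v, 0)
    obtain ⟨hs0, hc0⟩ := hzero
    refine ⟨Sum.elim vC 0, ?_, ?_⟩
    · intro h
      apply hvC
      funext i
      exact congrFun h (Sum.inl i)
    · rw [Matrix.fromBlocks_mulVec]
      funext i
      cases i with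
      | inl i =>
        simp only [Sum.elim_inl, Sum.elim_comp_inl, Sum.elim_comp_inr, Pi.smul_apply,
          Matrix.mulVec_zero, Pi.add_apply, Pi.zero_apply, add_zero, hs0]
        rw [h1]
        simp
      | inr i =>
        simp only [Sum.elim_inr, Sum.elim_comp_inl, Sum.elim_comp_inr, Pi.smul_apply,
          Matrix.mulVec_zero, Pi.add_apply, Pi.zero_apply, add_zero, hs0]
        rw [h3, hc0]
        simp
  · refine ⟨Sum.elim (s • vC) cC, ?_, ?_⟩
    · intro h
      apply hzero
      have hl : s • vC = 0 := by funext i; exact congrFun h (Sum.inl i)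
      have hr : cC = 0 := by funext i; exact congrFun h (Sum.inr i)
      rcases smul_eq_zero.mp hl with h' | h'
      · exact ⟨h', hr⟩
      · exact absurd h' hvC
    · rw [Matrix.fromBlocks_mulVec]
      funext i
      cases i with
      | inl i =>
        simp only [Sum.elim_inl, Sum.elim_comp_inl, Sum.elim_comp_inr, Pi.smul_apply,
          Pi.add_apply]
        rw [Matrix.mulVec_smul, h1, h2]
        simp only [Pi.smul_apply, Pi.sub_apply, smul_eq_mul]
        have : s * ((a : ℂ) * vC i) + ((a : ℂ) ^ 2 - 1) * vC i
            = ((a : ℂ) + s) * (s * vC i) := by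
          rw [← hs2]; ring
        rw [this]
      | inr i =>
        simp only [Sum.elim_inr, Sum.elim_comp_inl, Sum.elim_comp_inr, Pi.smul_apply,
          Pi.add_apply]
        rw [Matrix.mulVec_smul, h3, h4]
        simp only [Pi.smul_apply, smul_eq_mul]
        ring
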